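/- For all indices 1 ≤ a < b < c ≤ n and every symbol α ∈ {p, x, y}, in the presented group G the element p_{ab} α_{ac} p_{ab}^{-1} commutes with (t_b^{-1} y_{ab} t_b) x_{bc}: (p_{ab} α_{ac} p_{ab}^{-1})(t_b^{-1} y_{ab} t_b)(x_{bc}) =_R (t_b^{-1} y_{ab} t_b)(x_{bc})(p_{ab} α_{ac} p_{ab}^{-1}). -/
import Mathlib


namespace PureHilden

/-- The three symbols `p`, `x`, `y`. -/
inductive Sym : Type
  | p | x | y
  deriving DecidableEq

open Sym

/-- Generators of the free group `F`:  `p_{ij}, x_{ij}, y_{ij}` for `1 ≤ i < j ≤ n`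
and `t_k` for `1 ≤ k ≤ n`. -/
inductive Gen (n : ℕ) : Type
  | pair (s : Sym) (i j : ℕ) (h : 1 ≤ i ∧ i < j ∧ j ≤ n) : Gen n
  | t (k : ℕ) (h : 1 ≤ k ∧ k ≤ n) : Gen n

/-- The free group `F` on the set `S`. -/
abbrev FG (n : ℕ) := FreeGroup (Gen n)

/-- `α_{ij}` (symmetrised: `α_{ji} = α_{ij}`); junk value `1` for invalid indices. -/
def gsym (n : ℕ) (s : Sym) (i j : ℕ) : FG n :=
  if h : 1 ≤ min i j ∧ min i j < max i j ∧ max i j ≤ n then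
    FreeGroup.of (Gen.pair s (min i j) (max i j) h)
  else 1

def P (n i j : ℕ) : FG n := gsym n Sym.p i j
def X (n i j : ℕ) : FG n := gsym n Sym.x i j
def Y (n i j : ℕ) : FG n := gsym n Sym.y i j

def T (n k : ℕ) : FG n :=
  if h : 1 ≤ k ∧ k ≤ n then FreeGroup.of (Gen.t k h) else 1

/-- `1 ≤ k ≤ n`. -/
def Idx (n k : ℕ) : Prop := 1 ≤ k ∧ k ≤ n

/-- `1 ≤ i < j ≤ n`. -/
def Idx2 (n i j : ℕ) : Prop := 1 ≤ i ∧ i < j ∧ j ≤ n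

/-- `(i,j,k)` is a cyclic rotation of a strictly increasing triple. -/
def cyc3 (i j k : ℕ) : Prop := (i < j ∧ j < k) ∨ (j < k ∧ k < i) ∨ (k < i ∧ i < j)

/-- `(i,j,k,l)` is a cyclic rotation of a strictly increasing quadruple. -/
def cyc4 (i j k l : ℕ) : Prop :=
  (i < j ∧ j < k ∧ k < l) ∨ (j < k ∧ k < l ∧ l < i) ∨
  (k < l ∧ l < i ∧ i < j) ∨ (l < i ∧ i < j ∧ j < k)

def c2A : List (Sym × Sym × Sym) :=
  [(p,p,p),(p,y,y),(x,p,p),(x,x,p),(x,y,y),(y,p,p),(y,p,x),(y,y,y)]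
def c2B : List (Sym × Sym × Sym) :=
  [(p,p,p),(p,x,y),(x,p,p),(x,p,x),(x,x,y),(y,p,p),(y,x,y),(y,y,p)]
def c2C : List (Sym × Sym × Sym) :=
  [(p,p,p),(p,x,x),(x,p,p),(x,x,x),(x,y,p),(y,p,p),(y,p,y),(y,x,x)]

/-- The allowed triples `(α,β,γ)` for relation (C2), by cyclic ordering of `(i,j,k)`. -/
def C2ok (i j k : ℕ) (a b c : Sym) : Prop :=
  (i < j ∧ j < k ∧ (a,b,c) ∈ c2A) ∨
  (j < k ∧ k < i ∧ (a,b,c) ∈ c2B) ∨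
  (k < i ∧ i < j ∧ (a,b,c) ∈ c2C)

/-- The relations `R`, encoded as the words `u * v⁻¹` for each relation `u = v`. -/
inductive Rel (n : ℕ) : FG n → Prop
  | cpt {i j k : ℕ} (hij : Idx2 n i j) (hk : Idx n k) :
      Rel n (P n i j * T n k * (T n k * P n i j)⁻¹)
  | ctt {i j : ℕ} (hi : Idx n i) (hj : Idx n j) :
      Rel n (T n i * T n j * (T n j * T n i)⁻¹)
  | cxt {i j k : ℕ} (hij : Idx2 n i j) (hk : Idx n k) (hne : k ≠ i) :
      Rel n (X n i j * T n k * (T n k * X n i j)⁻¹)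
  | cyt {i j k : ℕ} (hij : Idx2 n i j) (hk : Idx n k) (hne : k ≠ j) :
      Rel n (Y n i j * T n k * (T n k * Y n i j)⁻¹)
  | c1 (a b : Sym) {i j k l : ℕ} (hi : Idx n i) (hj : Idx n j) (hk : Idx n k)
      (hl : Idx n l) (hc : cyc4 i j k l) :
      Rel n (gsym n a i j * gsym n b k l * (gsym n b k l * gsym n a i j)⁻¹)
  | c2 (a b c : Sym) {i j k : ℕ} (hi : Idx n i) (hj : Idx n j) (hk : Idx n k)
      (h : C2ok i j k a b c) :
      Rel n (gsym n a i j * (gsym n b i k * gsym n c j k) *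
             (gsym n b i k * gsym n c j k * gsym n a i j)⁻¹)
  | c3 (a b : Sym) {i j k l : ℕ} (hi : Idx n i) (hj : Idx n j) (hk : Idx n k)
      (hl : Idx n l) (hc : cyc4 i j k l) :
      Rel n (gsym n a i k * (P n j k * gsym n b j l * (P n j k)⁻¹) *
             (P n j k * gsym n b j l * (P n j k)⁻¹ * gsym n a i k)⁻¹)
  | mx {i j : ℕ} (hij : Idx2 n i j) :
      Rel n (X n i j * P n i j * T n i * (P n i j * T n i * X n i j)⁻¹)
  | my {i j : ℕ} (hij : Idx2 n i j) :
      Rel n (Y n i j * P n i j * T n j * (P n i j * T n j * Y n i j)⁻¹)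

/-- The presented group `G = ⟨S ∣ R⟩`. -/
abbrev GG (n : ℕ) := FG n ⧸ Subgroup.normalClosure {w : FG n | Rel n w}

/-- The quotient homomorphism `π : F → G`. -/
def piG (n : ℕ) : FG n →* GG n := QuotientGroup.mk' _

/-- The map defining `Φ_{σ_m}` on generators. -/
def phiSigmaMap (n m : ℕ) : Gen n → FG n
  | Gen.pair s i j _ =>
      if i = m ∧ j = m + 1 then
        match s with
        | Sym.p => P n m (m+1)
        | Sym.x => (T n (m+1))⁻¹ * Y n m (m+1) * T n (m+1)
        | Sym.y => X n m (m+1)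
      else if i = m then gsym n s (m+1) j
      else if j = m then gsym n s (m+1) i
      else if i = m + 1 then P n m (m+1) * gsym n s m j * (P n m (m+1))⁻¹
      else if j = m + 1 then P n m (m+1) * gsym n s m i * (P n m (m+1))⁻¹
      else gsym n s i j
  | Gen.t k _ =>
      if k = m then T n (m+1) else if k = m + 1 then T n m else T n k

/-- `Φ_{σ_m} : F → F`. -/
def phiSigma (n m : ℕ) : FG n →* FG n := FreeGroup.lift (phiSigmaMap n m)

/-- The map defining `Ψ_{σ_m}` on generators. -/
def psiSigmaMap (n m : ℕ) : Gen n → FG n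
  | Gen.pair s i j _ =>
      if i = m ∧ j = m + 1 then
        match s with
        | Sym.p => P n m (m+1)
        | Sym.x => Y n m (m+1)
        | Sym.y => T n m * X n m (m+1) * (T n m)⁻¹
      else if i = m then (P n m (m+1))⁻¹ * gsym n s (m+1) j * P n m (m+1)
      else if j = m then (P n m (m+1))⁻¹ * gsym n s (m+1) i * P n m (m+1)
      else if i = m + 1 then gsym n s m j
      else if j = m + 1 then gsym n s m i
      else gsym n s i j
  | Gen.t k _ =>
      if k = m then T n (m+1) else if k = m + 1 then T n m else T n k

/-- `Ψ_{σ_m} : F → F`. -/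
def psiSigma (n m : ℕ) : FG n →* FG n := FreeGroup.lift (psiSigmaMap n m)

/-- The map defining `Φ_{τ_m}` on generators. -/
def phiTauMap (n m : ℕ) : Gen n → FG n
  | Gen.pair s i j _ =>
      match s with
      | Sym.p => P n i j
      | Sym.x => if m = i then (X n i j)⁻¹ * P n i j else X n i j
      | Sym.y => if m = j then (Y n i j)⁻¹ * P n i j else Y n i j
  | Gen.t k _ => T n k

/-- `Φ_{τ_m} : F → F`. -/
def phiTau (n m : ℕ) : FG n →* FG n := FreeGroup.lift (phiTauMap n m)

/-- The map defining `Ψ_{τ_m}` on generators. -/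
def psiTauMap (n m : ℕ) : Gen n → FG n
  | Gen.pair s i j _ =>
      match s with
      | Sym.p => P n i j
      | Sym.x => if m = i then P n i j * (X n i j)⁻¹ else X n i j
      | Sym.y => if m = j then P n i j * (Y n i j)⁻¹ else Y n i j
  | Gen.t k _ => T n k

/-- `Ψ_{τ_m} : F → F`. -/
def psiTau (n m : ℕ) : FG n →* FG n := FreeGroup.lift (psiTauMap n m)

lemma gsym_comm (n : ℕ) (s : Sym) (i j : ℕ) : gsym n s i j = gsym n s j i := by
  unfold gsym
  rw [min_comm, max_comm]

lemma pi_eq {n : ℕ} {u v : FG n} (h : Rel n (u * v⁻¹)) : piG n u = piG n v := by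
  have hm : (u * v⁻¹) ∈ Subgroup.normalClosure {w : FG n | Rel n w} :=
    Subgroup.subset_normalClosure h
  have h1 : piG n (u * v⁻¹) = 1 := (QuotientGroup.eq_one_iff _).mpr hm
  rw [map_mul, map_inv] at h1
  exact mul_inv_eq_one.mp h1

lemma key {G : Type*} [Group G] (p t y x s q : G)
    (h1 : y * p * t = p * t * y) (h2 : p * t = t * p)
    (h3 : x * (p * q) = p * q * x) (h4 : x * (y * q) = y * q * x)
    (h5 : s * (x * y) = x * y * s) :
    p * s * p⁻¹ * (t⁻¹ * y * t) * x = t⁻¹ * y * t * x * (p * s * p⁻¹) := by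
  have hA : t⁻¹ * y * t = p * y * p⁻¹ := by
    have e1 : y = p * t * y * t⁻¹ * p⁻¹ := by rw [← h1]; group
    calc t⁻¹ * y * t = t⁻¹ * (p * t * y * t⁻¹ * p⁻¹) * t := by rw [← e1]
      _ = (t⁻¹ * p * t) * y * (t⁻¹ * p⁻¹ * t) := by group
      _ = p * y * p⁻¹ := by
          have e2 : t⁻¹ * p * t = p := by rw [mul_assoc, h2]; group
          have e3 : t⁻¹ * p⁻¹ * t = p⁻¹ := by
            have hinv : t⁻¹ * p⁻¹ = p⁻¹ * t⁻¹ := by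
              rw [← mul_inv_rev, ← mul_inv_rev, h2]
            rw [hinv]; group
          rw [e2, e3]
  have hB : p⁻¹ * x * p = q * x * q⁻¹ := by
    have e : x = p * q * x * q⁻¹ * p⁻¹ := by rw [← h3]; group
    calc p⁻¹ * x * p = p⁻¹ * (p * q * x * q⁻¹ * p⁻¹) * p := by rw [← e]
      _ = q * x * q⁻¹ := by group
  have hC : y⁻¹ * x * y = q * x * q⁻¹ := by
    have e : x = y * q * x * q⁻¹ * y⁻¹ := by rw [← h4]; group
    calc y⁻¹ * x * y = y⁻¹ * (y * q * x * q⁻¹ * y⁻¹) * y := by rw [← e]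
      _ = q * x * q⁻¹ := by group
  have hD : y * (p⁻¹ * x * p) = x * y := by
    rw [hB, ← hC]; group
  calc p * s * p⁻¹ * (t⁻¹ * y * t) * x
      = p * s * p⁻¹ * (p * y * p⁻¹) * x := by rw [hA]
    _ = p * s * (y * (p⁻¹ * x * p)) * p⁻¹ := by group
    _ = p * s * (x * y) * p⁻¹ := by rw [hD]
    _ = p * (x * y) * s * p⁻¹ := by rw [mul_assoc p s, h5, ← mul_assoc]
    _ = p * (y * (p⁻¹ * x * p)) * s * p⁻¹ := by rw [hD]
    _ = (p * y * p⁻¹) * x * (p * s * p⁻¹) := by group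
    _ = t⁻¹ * y * t * x * (p * s * p⁻¹) := by rw [hA]

/-- STATEMENT 19: For `1 ≤ a < b < c ≤ n` and every symbol `α ∈ {p,x,y}`, in `G`
the element `p_ab α_ac p_ab⁻¹` commutes with `(t_b⁻¹ y_ab t_b) x_bc`. -/
theorem stmt19 (n : ℕ) (hn : 2 ≤ n) (a b c : ℕ)
    (h : 1 ≤ a ∧ a < b ∧ b < c ∧ c ≤ n) (s : Sym) :
    piG n (P n a b * gsym n s a c * (P n a b)⁻¹ *
           ((T n b)⁻¹ * Y n a b * T n b) * X n b c) =
    piG n ((T n b)⁻¹ * Y n a b * T n b * X n b c *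
           (P n a b * gsym n s a c * (P n a b)⁻¹)) := by
  obtain ⟨ha1, hab, hbc, hcn⟩ := h
  have hIa : Idx n a := ⟨ha1, by omega⟩
  have hIb : Idx n b := ⟨by omega, by omega⟩
  have hIc : Idx n c := ⟨by omega, hcn⟩
  have hab2 : Idx2 n a b := ⟨ha1, hab, by omega⟩
  -- h1 : Y ab * P ab * T b = P ab * T b * Y ab
  have h1 := pi_eq (Rel.my hab2)
  -- h2 : P ab * T b = T b * P ab
  have h2 := pi_eq (Rel.cpt hab2 hIb)
  -- h3 : X bc * (P ab * P ac) = P ab * P ac * X bc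
  have h3 := pi_eq (Rel.c2 (n := n) Sym.x Sym.p Sym.p hIb hIc hIa
    (Or.inr (Or.inr ⟨hab, hbc, by decide⟩)))
  rw [gsym_comm n Sym.p b a, gsym_comm n Sym.p c a] at h3
  -- h4 : X bc * (Y ab * P ac) = Y ab * P ac * X bc
  have h4 := pi_eq (Rel.c2 (n := n) Sym.x Sym.y Sym.p hIb hIc hIa
    (Or.inr (Or.inr ⟨hab, hbc, by decide⟩)))
  rw [gsym_comm n Sym.y b a, gsym_comm n Sym.p c a] at h4
  -- h5 : gsym s ac * (X bc * Y ab) = X bc * Y ab * gsym s ac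
  have h5 := pi_eq (Rel.c2 (n := n) s Sym.x Sym.y hIc hIa hIb
    (Or.inr (Or.inl ⟨hab, hbc, by cases s <;> decide⟩)))
  rw [gsym_comm n s c a, gsym_comm n Sym.x c b] at h5
  simp only [map_mul, map_inv] at h1 h2 h3 h4 h5 ⊢
  exact key (piG n (P n a b)) (piG n (T n b)) (piG n (Y n a b))
    (piG n (X n b c)) (piG n (gsym n s a c)) (piG n (P n a c)) h1 h2 h3 h4 h5

end PureHilden
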